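/- Let V be a nonempty finite set and r : V × V → [0,∞) with r(x,x) = 0 for all x ∈ V, and let D₁,…,D_𝔩 be the communicating (equivalence) classes of the relation determined by r. Then for every probability measure ω on V, 𝔍(ω) = Σ over those classes D_a with ω(D_a) > 0 of ω(D_a)·𝔍(ω_{D_a}), where ω_{D_a} is the probability measure ω conditioned on D_a. -/

import Mathlib

open Filter Topology Finset

/-- The Donsker–Varadhan level-two rate functional of the Markov chain on the finite
set `V` with jump rates `r`, evaluated at a weight function `ω` on `V`:
`𝔍(ω) = sup_{u > 0} Σ_x ω(x) · (−(Lu)(x)/u(x))`, where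
`(Lu)(x) = Σ_y r(x,y)(u(y) − u(x))`, viewed as an element of `[0,∞]`. -/
noncomputable def dvRate {V : Type*} [Fintype V] (r : V → V → ℝ) (ω : V → ℝ) :
    ENNReal :=
  ⨆ u : {u : V → ℝ // ∀ x, 0 < u x},
    ENNReal.ofReal (∑ x, ω x * (-((∑ y, r x y * (u.1 y - u.1 x)) / u.1 x)))

/-- The inner sum of the Donsker–Varadhan functional. -/
noncomputable def Sfun {V : Type*} [Fintype V] (r : V → V → ℝ) (w : V → ℝ) (u : V → ℝ) : ℝ :=
  ∑ x, w x * (-((∑ y, r x y * (u y - u x)) / u x))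

lemma dvRate_eq_iSup_Sfun {V : Type*} [Fintype V] (r : V → V → ℝ) (w : V → ℝ) :
    dvRate r w = ⨆ u : {u : V → ℝ // ∀ x, 0 < u x}, ENNReal.ofReal (Sfun r w u.1) := rfl

lemma myOfRealSumLe {α : Type*} (s : Finset α) (f : α → ℝ) :
    ENNReal.ofReal (∑ a ∈ s, f a) ≤ ∑ a ∈ s, ENNReal.ofReal (f a) := by
  classical
  induction s using Finset.induction_on with
  | empty => simp
  | insert _ _ ha ih =>
    rw [Finset.sum_insert ha, Finset.sum_insert ha]
    exact (ENNReal.ofReal_add_le).trans (add_le_add_right ih _)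

lemma mySumISupLe {α ι : Type*} [Nonempty ι] (s : Finset α) (f : α → ι → ENNReal) :
    ∑ a ∈ s, ⨆ i, f a i ≤ ⨆ g : α → ι, ∑ a ∈ s, f a (g a) := by
  classical
  induction s using Finset.induction_on with
  | empty => simp
  | @insert a s ha ih =>
    rw [Finset.sum_insert ha]
    calc (⨆ i, f a i) + ∑ b ∈ s, ⨆ i, f b i
        ≤ (⨆ i, f a i) + ⨆ g : α → ι, ∑ b ∈ s, f b (g b) := add_le_add_right ih _
      _ ≤ ⨆ g : α → ι, ∑ b ∈ insert a s, f b (g b) := by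
          rw [ENNReal.iSup_add]
          refine iSup_le fun i => ?_
          rw [ENNReal.add_iSup]
          refine iSup_le fun g => ?_
          refine le_trans (le_of_eq ?_) (le_iSup _ (Function.update g a i))
          rw [Finset.sum_insert ha, Function.update_self]
          refine congrArg _ (Finset.sum_congr rfl fun b hb => ?_)
          rw [Function.update_of_ne (by rintro rfl; exact ha hb) i g]


/-- Decomposition of the Donsker–Varadhan functional over the communicating
(equivalence) classes `D 0, …, D (l-1)` of the chain: for every probability
measure `ω`, `𝔍(ω) = Σ_{a : ω(D_a) > 0} ω(D_a) · 𝔍(ω_{D_a})`, where `ω_{D_a}` is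
`ω` conditioned on `D_a`. Here `y ∈ D a` iff `y` communicates with any `x ∈ D a`,
communication being mutual reachability through positive jump rates. -/
theorem stmt11 {V : Type*} [Fintype V] [DecidableEq V] [Nonempty V]
    (r : V → V → ℝ) (hr : ∀ x y, 0 ≤ r x y) (hdiag : ∀ x, r x x = 0)
    (l : ℕ) (D : Fin l → Finset V)
    (hcover : ∀ x : V, ∃! a : Fin l, x ∈ D a)
    (hclass : ∀ a : Fin l, ∀ x ∈ D a, ∀ y : V,
      (y ∈ D a ↔ Relation.ReflTransGen (fun p q => 0 < r p q) x y ∧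
                  Relation.ReflTransGen (fun p q => 0 < r p q) y x))
    (ω : V → ℝ) (hω0 : ∀ x, 0 ≤ ω x) (hω1 : ∑ x, ω x = 1) :
    dvRate r ω =
      ∑ a ∈ Finset.univ.filter (fun a : Fin l => 0 < ∑ x ∈ D a, ω x),
        ENNReal.ofReal (∑ x ∈ D a, ω x) *
          dvRate r (fun x => if x ∈ D a then ω x / ∑ z ∈ D a, ω z else 0) := by
  classical
  set A : Finset (Fin l) := Finset.univ.filter (fun a : Fin l => 0 < ∑ x ∈ D a, ω x) with hA
  -- the class of each point
  set c : V → Fin l := fun x => (hcover x).choose with hc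
  have hmemc : ∀ x, x ∈ D (c x) := fun x => (hcover x).choose_spec.1
  have huniq : ∀ x a, x ∈ D a → a = c x := fun x a h => (hcover x).choose_spec.2 a h
  have hDfib : ∀ a : Fin l, Finset.univ.filter (fun x => c x = a) = D a := by
    intro a; ext z
    simp only [Finset.mem_filter, Finset.mem_univ, true_and]
    constructor
    · rintro rfl; exact hmemc z
    · intro h; exact (huniq z a h).symm
  have hcDnn : ∀ a : Fin l, 0 ≤ ∑ x ∈ D a, ω x := fun a => Finset.sum_nonneg fun y _ => hω0 y
  -- decomposition of weighted sums over classes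
  have hfib : ∀ G : Fin l → V → ℝ,
      ∑ x, ω x * G (c x) x = ∑ a : Fin l, ∑ x ∈ D a, ω x * G a x := by
    intro G
    rw [← Finset.sum_fiberwise_of_maps_to (fun x _ => Finset.mem_univ (c x))
      (fun x => ω x * G (c x) x)]
    refine Finset.sum_congr rfl fun a _ => ?_
    rw [← hDfib a]
    refine Finset.sum_congr rfl fun x hx => ?_
    rw [(Finset.mem_filter.mp hx).2]
  have hzero : ∀ a : Fin l, a ∉ A → ∀ x ∈ D a, ω x = 0 := by
    intro a ha x hx
    have h1 : ¬ 0 < ∑ x ∈ D a, ω x := by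
      intro h; exact ha (by simp [hA, h])
    have h0 : ∑ x ∈ D a, ω x = 0 := le_antisymm (not_lt.mp h1) (hcDnn a)
    exact (Finset.sum_eq_zero_iff_of_nonneg (fun y _ => hω0 y)).mp h0 x hx
  have hdecomp : ∀ G : Fin l → V → ℝ,
      ∑ x, ω x * G (c x) x = ∑ a ∈ A,
        (∑ x ∈ D a, ω x) * ∑ x, (if x ∈ D a then ω x / ∑ z ∈ D a, ω z else 0) * G a x := by
    intro G
    rw [hfib G]
    rw [← Finset.sum_subset (Finset.filter_subset _ Finset.univ)
      (fun a _ ha => Finset.sum_eq_zero fun x hx => by rw [hzero a ha x hx, zero_mul])]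
    refine Finset.sum_congr rfl fun a haA => ?_
    have hpos : 0 < ∑ x ∈ D a, ω x := by
      have := Finset.mem_filter.mp haA; exact this.2
    have hne : (∑ x ∈ D a, ω x) ≠ 0 := ne_of_gt hpos
    have h1 : (∑ x, (if x ∈ D a then ω x / ∑ z ∈ D a, ω z else 0) * G a x)
        = ∑ x ∈ D a, (ω x / ∑ z ∈ D a, ω z) * G a x := by
      simp only [ite_mul, zero_mul]
      rw [Fintype.sum_ite_mem (D a) (fun x => (ω x / ∑ z ∈ D a, ω z) * G a x)]
    rw [h1, Finset.mul_sum]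
    refine Finset.sum_congr rfl fun x _ => ?_
    field_simp
  -- rewriting the conditioned dvRate as a supremum of Sfun
  have hdv : ∀ a : Fin l, dvRate r (fun x => if x ∈ D a then ω x / ∑ z ∈ D a, ω z else 0)
      = ⨆ u : {u : V → ℝ // ∀ x, 0 < u x},
          ENNReal.ofReal (Sfun r (fun x => if x ∈ D a then ω x / ∑ z ∈ D a, ω z else 0) u.1) :=
    fun a => rfl
  -- THE CORE CLAIM (lower bound construction)
  have hcore : ∀ U : Fin l → {u : V → ℝ // ∀ x, 0 < u x},
      (∀ a, 0 ≤ Sfun r (fun x => if x ∈ D a then ω x / ∑ z ∈ D a, ω z else 0) (U a).1) →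
      ∑ a ∈ A, ENNReal.ofReal (∑ x ∈ D a, ω x) *
        ENNReal.ofReal (Sfun r (fun x => if x ∈ D a then ω x / ∑ z ∈ D a, ω z else 0) (U a).1)
      ≤ dvRate r ω := by
    intro U hU
    set Reach : V → V → Prop := Relation.ReflTransGen (fun p q => 0 < r p q) with hReach
    have hsame : ∀ x y, y ∈ D (c x) → (Reach x y ∧ Reach y x) := fun x y hy =>
      (hclass (c x) x (hmemc x) y).mp hy
    have hsame' : ∀ x y, Reach x y → Reach y x → c y = c x := fun x y h1 h2 =>
      (huniq y (c x) ((hclass (c x) x (hmemc x) y).mpr ⟨h1, h2⟩)).symm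
    -- the height function
    obtain ⟨m, hm_eq, hm_lt⟩ : ∃ m : V → ℕ,
        (∀ x y, Reach x y → Reach y x → m x = m y) ∧
        (∀ x y, 0 < r x y → ¬ Reach y x → m x < m y) := by
      refine ⟨fun x => Fintype.card V - (Finset.univ.filter (fun z => Reach x z)).card, ?_, ?_⟩
      · intro x y h1 h2
        have : (Finset.univ.filter (fun z => Reach x z))
            = Finset.univ.filter (fun z => Reach y z) := by
          ext z
          simp only [Finset.mem_filter, Finset.mem_univ, true_and]
          exact ⟨fun h => h2.trans h, fun h => h1.trans h⟩
        dsimp only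
        rw [this]
      · intro x y hxy hnyx
        have hxy' : Reach x y := Relation.ReflTransGen.single hxy
        have hsub : (Finset.univ.filter (fun z => Reach y z))
            ⊆ Finset.univ.filter (fun z => Reach x z) := by
          intro z hz
          simp only [Finset.mem_filter, Finset.mem_univ, true_and] at hz ⊢
          exact hxy'.trans hz
        have hxmem : x ∈ Finset.univ.filter (fun z => Reach x z) := by
          simp only [Finset.mem_filter, Finset.mem_univ, true_and]
          exact Relation.ReflTransGen.refl
        have hxnmem : x ∉ Finset.univ.filter (fun z => Reach y z) := by
          simp only [Finset.mem_filter, Finset.mem_univ, true_and]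
          exact hnyx
        have hcard : (Finset.univ.filter (fun z => Reach y z)).card
            < (Finset.univ.filter (fun z => Reach x z)).card :=
          Finset.card_lt_card ⟨hsub, fun h => hxnmem (h hxmem)⟩
        have hle : (Finset.univ.filter (fun z => Reach x z)).card ≤ Fintype.card V := by
          simpa using Finset.card_filter_le Finset.univ (fun z => Reach x z)
        dsimp only
        omega
    -- the scaling factor
    have hFl : Nonempty (Fin l) := ⟨c (Classical.arbitrary V)⟩
    obtain ⟨t, ht0, ht1, htle⟩ : ∃ t : ℝ, 0 < t ∧ t ≤ 1 ∧
        ∀ a b : Fin l, ∀ y : V, t * (U b).1 y ≤ (U a).1 y := by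
      have hne : (Finset.univ : Finset (Fin l × Fin l × V)).Nonempty := Finset.univ_nonempty
      refine ⟨min 1 (Finset.univ.inf' hne (fun p : Fin l × Fin l × V =>
        (U p.1).1 p.2.2 / (U p.2.1).1 p.2.2)), ?_, min_le_left _ _, ?_⟩
      · refine lt_min one_pos ?_
        rw [Finset.lt_inf'_iff]
        intro p _
        exact div_pos ((U p.1).2 p.2.2) ((U p.2.1).2 p.2.2)
      · intro a b y
        have h1 : min 1 (Finset.univ.inf' hne (fun p : Fin l × Fin l × V =>
            (U p.1).1 p.2.2 / (U p.2.1).1 p.2.2)) ≤ (U a).1 y / (U b).1 y :=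
          le_trans (min_le_right _ _) (Finset.inf'_le _ (Finset.mem_univ (a, b, y)))
        exact (le_div_iff₀ ((U b).2 y)).mp h1
    -- the key comparison for a single jump
    have key : ∀ x y, 0 < r x y →
        (t ^ m y * (U (c y)).1 y) * (U (c x)).1 x
          ≤ (U (c x)).1 y * (t ^ m x * (U (c x)).1 x) := by
      intro x y hxy
      by_cases hcxy : c y = c x
      · have h := hsame x y (by rw [← hcxy]; exact hmemc y)
        rw [hcxy, hm_eq x y h.1 h.2]
        ring_nf
        exact le_refl _
      · have hre : Reach x y := Relation.ReflTransGen.single hxy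
        have hnyx : ¬ Reach y x := fun h => hcxy (hsame' x y hre h)
        have hlt := hm_lt x y hxy hnyx
        have hp : t ^ m y ≤ t ^ m x * t := by
          calc t ^ m y ≤ t ^ (m x + 1) :=
                pow_le_pow_of_le_one (le_of_lt ht0) ht1 hlt
            _ = t ^ m x * t := pow_succ t (m x)
        have h1 : t ^ m y * (U (c y)).1 y ≤ t ^ m x * (U (c x)).1 y := by
          calc t ^ m y * (U (c y)).1 y ≤ (t ^ m x * t) * (U (c y)).1 y :=
                mul_le_mul_of_nonneg_right hp (le_of_lt ((U (c y)).2 y))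
            _ = t ^ m x * (t * (U (c y)).1 y) := by ring
            _ ≤ t ^ m x * (U (c x)).1 y :=
                mul_le_mul_of_nonneg_left (htle (c x) (c y) y)
                  (pow_nonneg (le_of_lt ht0) _)
        calc (t ^ m y * (U (c y)).1 y) * (U (c x)).1 x
            ≤ (t ^ m x * (U (c x)).1 y) * (U (c x)).1 x :=
              mul_le_mul_of_nonneg_right h1 (le_of_lt ((U (c x)).2 x))
          _ = (U (c x)).1 y * (t ^ m x * (U (c x)).1 x) := by ring
    -- the combined test function
    have hu0 : ∀ x, 0 < t ^ m x * (U (c x)).1 x :=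
      fun x => mul_pos (pow_pos ht0 _) ((U (c x)).2 x)
    -- pointwise comparison of the rate expressions
    have hterm : ∀ x : V,
        (-((∑ y, r x y * ((U (c x)).1 y - (U (c x)).1 x)) / (U (c x)).1 x))
        ≤ (-((∑ y, r x y * ((t ^ m y * (U (c y)).1 y) - (t ^ m x * (U (c x)).1 x)))
              / (t ^ m x * (U (c x)).1 x))) := by
      intro x
      rw [neg_le_neg_iff]
      rw [Finset.sum_div, Finset.sum_div]
      refine Finset.sum_le_sum fun y _ => ?_
      rcases eq_or_lt_of_le (hr x y) with h | h
      · rw [← h]; simp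
      · have hkey := key x y h
        have hux : 0 < t ^ m x * (U (c x)).1 x := hu0 x
        have hvx : 0 < (U (c x)).1 x := (U (c x)).2 x
        rw [div_le_div_iff₀ hux hvx]
        have h3 := mul_le_mul_of_nonneg_left hkey (hr x y)
        nlinarith [h3]
    -- sum comparison
    have hsum1 : ∑ x, ω x * (-((∑ y, r x y * ((U (c x)).1 y - (U (c x)).1 x)) / (U (c x)).1 x))
        ≤ ∑ x, ω x * (-((∑ y, r x y * ((t ^ m y * (U (c y)).1 y)
              - (t ^ m x * (U (c x)).1 x))) / (t ^ m x * (U (c x)).1 x))) :=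
      Finset.sum_le_sum fun x _ => mul_le_mul_of_nonneg_left (hterm x) (hω0 x)
    have hsum2 : ∑ a ∈ A, (∑ x ∈ D a, ω x) *
          Sfun r (fun x => if x ∈ D a then ω x / ∑ z ∈ D a, ω z else 0) (U a).1
        = ∑ x, ω x * (-((∑ y, r x y * ((U (c x)).1 y - (U (c x)).1 x)) / (U (c x)).1 x)) :=
      (hdecomp (fun a x => -((∑ y, r x y * ((U a).1 y - (U a).1 x)) / (U a).1 x))).symm
    calc ∑ a ∈ A, ENNReal.ofReal (∑ x ∈ D a, ω x) *
          ENNReal.ofReal (Sfun r (fun x => if x ∈ D a then ω x / ∑ z ∈ D a, ω z else 0) (U a).1)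
        = ENNReal.ofReal (∑ a ∈ A, (∑ x ∈ D a, ω x) *
            Sfun r (fun x => if x ∈ D a then ω x / ∑ z ∈ D a, ω z else 0) (U a).1) := by
          rw [ENNReal.ofReal_sum_of_nonneg
            (fun a _ => mul_nonneg (hcDnn a) (hU a))]
          exact Finset.sum_congr rfl fun a _ => (ENNReal.ofReal_mul (hcDnn a)).symm
      _ ≤ ENNReal.ofReal (∑ x, ω x * (-((∑ y, r x y * ((t ^ m y * (U (c y)).1 y)
            - (t ^ m x * (U (c x)).1 x))) / (t ^ m x * (U (c x)).1 x)))) := by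
          refine ENNReal.ofReal_le_ofReal ?_
          rw [hsum2]
          exact hsum1
      _ ≤ dvRate r ω := by
          rw [dvRate_eq_iSup_Sfun]
          exact le_iSup (fun u : {u : V → ℝ // ∀ x, 0 < u x} =>
            ENNReal.ofReal (Sfun r ω u.1)) ⟨fun x => t ^ m x * (U (c x)).1 x, hu0⟩
  -- now the two inequalities
  refine le_antisymm ?_ ?_
  · -- upper bound
    rw [dvRate_eq_iSup_Sfun]
    refine iSup_le fun u => ?_
    calc ENNReal.ofReal (Sfun r ω u.1)
        = ENNReal.ofReal (∑ a ∈ A, (∑ x ∈ D a, ω x) *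
            Sfun r (fun x => if x ∈ D a then ω x / ∑ z ∈ D a, ω z else 0) u.1) :=
          congrArg ENNReal.ofReal
            (hdecomp (fun _ x => -((∑ y, r x y * (u.1 y - u.1 x)) / u.1 x)))
      _ ≤ ∑ a ∈ A, ENNReal.ofReal ((∑ x ∈ D a, ω x) *
            Sfun r (fun x => if x ∈ D a then ω x / ∑ z ∈ D a, ω z else 0) u.1) :=
          myOfRealSumLe _ _
      _ ≤ ∑ a ∈ A, ENNReal.ofReal (∑ x ∈ D a, ω x) *
            dvRate r (fun x => if x ∈ D a then ω x / ∑ z ∈ D a, ω z else 0) := by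
          refine Finset.sum_le_sum fun a _ => ?_
          rw [ENNReal.ofReal_mul (hcDnn a)]
          refine mul_le_mul_right ?_ _
          rw [hdv a]
          exact le_iSup (fun u' : {u : V → ℝ // ∀ x, 0 < u x} =>
            ENNReal.ofReal (Sfun r (fun x => if x ∈ D a then ω x / ∑ z ∈ D a, ω z else 0)
              u'.1)) u
  · -- lower bound
    have hSone : ∀ a : Fin l,
        Sfun r (fun x => if x ∈ D a then ω x / ∑ z ∈ D a, ω z else 0) (fun _ => (1:ℝ)) = 0 := by
      intro a
      simp [Sfun]
    set one : {u : V → ℝ // ∀ x, 0 < u x} := ⟨fun _ => (1:ℝ), fun _ => one_pos⟩ with hone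
    set fix : Fin l → {u : V → ℝ // ∀ x, 0 < u x} → {u : V → ℝ // ∀ x, 0 < u x} :=
      fun a u => if 0 ≤ Sfun r (fun x => if x ∈ D a then ω x / ∑ z ∈ D a, ω z else 0) u.1
        then u else one with hfix
    have hfixnn : ∀ a u, 0 ≤ Sfun r (fun x => if x ∈ D a then ω x / ∑ z ∈ D a, ω z else 0)
        (fix a u).1 := by
      intro a u
      by_cases h : 0 ≤ Sfun r (fun x => if x ∈ D a then ω x / ∑ z ∈ D a, ω z else 0) u.1
      · rw [hfix]; simp only [if_pos h]; exact h
      · rw [hfix]; simp only [if_neg h, hone]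
        rw [hSone a]
    have hfixsup : ∀ a : Fin l, dvRate r (fun x => if x ∈ D a then ω x / ∑ z ∈ D a, ω z else 0)
        = ⨆ u : {u : V → ℝ // ∀ x, 0 < u x}, ENNReal.ofReal
            (Sfun r (fun x => if x ∈ D a then ω x / ∑ z ∈ D a, ω z else 0) (fix a u).1) := by
      intro a
      rw [hdv a]
      apply le_antisymm
      · refine iSup_le fun u => ?_
        by_cases h : 0 ≤ Sfun r (fun x => if x ∈ D a then ω x / ∑ z ∈ D a, ω z else 0) u.1
        · refine le_trans (le_of_eq ?_) (le_iSup _ u)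
          rw [hfix]; simp only [if_pos h]
        · rw [ENNReal.ofReal_of_nonpos (le_of_lt (not_le.mp h))]
          exact zero_le
      · refine iSup_le fun u => ?_
        exact le_iSup (fun u' : {u : V → ℝ // ∀ x, 0 < u x} => ENNReal.ofReal
          (Sfun r (fun x => if x ∈ D a then ω x / ∑ z ∈ D a, ω z else 0) u'.1)) (fix a u)
    have hFl : Nonempty {u : V → ℝ // ∀ x, 0 < u x} := ⟨⟨fun _ => 1, fun _ => one_pos⟩⟩
    calc ∑ a ∈ A, ENNReal.ofReal (∑ x ∈ D a, ω x) *
          dvRate r (fun x => if x ∈ D a then ω x / ∑ z ∈ D a, ω z else 0)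
        = ∑ a ∈ A, ⨆ u : {u : V → ℝ // ∀ x, 0 < u x},
            ENNReal.ofReal (∑ x ∈ D a, ω x) * ENNReal.ofReal
              (Sfun r (fun x => if x ∈ D a then ω x / ∑ z ∈ D a, ω z else 0) (fix a u).1) := by
          refine Finset.sum_congr rfl fun a _ => ?_
          rw [hfixsup a, ENNReal.mul_iSup]
      _ ≤ ⨆ g : Fin l → {u : V → ℝ // ∀ x, 0 < u x}, ∑ a ∈ A,
            ENNReal.ofReal (∑ x ∈ D a, ω x) * ENNReal.ofReal
              (Sfun r (fun x => if x ∈ D a then ω x / ∑ z ∈ D a, ω z else 0) (fix a (g a)).1) :=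
          mySumISupLe A _
      _ ≤ dvRate r ω := iSup_le fun g => hcore (fun a => fix a (g a)) (fun a => hfixnn a (g a))
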